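/- Let S ≥ 2 and let p̃, p̄ ∈ Δ^S be probability vectors all of whose tail sums p̃_i + ⋯ + p̃_S and p̄_i + ⋯ + p̄_S are positive. For i = 1,…,S−1 define ỹ_i := p̃_i/(p̃_i+⋯+p̃_S), ȳ_i := p̄_i/(p̄_i+⋯+p̄_S), H̃_{i+1} := (Σ_{j=i+1}^S h_j·p̃_j)/(Σ_{j=i+1}^S p̃_j), and H̄_{i+1} := (Σ_{j=i+1}^S h_j·p̄_j)/(Σ_{j=i+1}^S p̄_j). Then for any h ∈ ℝ^S: (p̃ − p̄)ᵀh = Σ_{i=1}^{S−1} (ỹ_i − ȳ_i)·(h_i − H̃_{i+1})·(p̄_i + ⋯ + p̄_S) = Σ_{i=1}^{S−1} (ỹ_i − ȳ_i)·(h_i − H̄_{i+1})·(p̃_i + ⋯ + p̃_S). -/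

import Mathlib

open Finset

private def tl (S : ℕ) (f : Fin S → ℝ) (n : ℕ) : ℝ :=
  ∑ j ∈ univ.filter (fun j : Fin S => n ≤ (j : ℕ)), f j

private lemma tl_succ (S n : ℕ) (hn : n < S) (f : Fin S → ℝ) :
    tl S f n = f ⟨n, hn⟩ + tl S f (n + 1) := by
  unfold tl
  rw [show univ.filter (fun j : Fin S => n ≤ (j : ℕ)) =
      insert ⟨n, hn⟩ (univ.filter (fun j : Fin S => n + 1 ≤ (j : ℕ))) from by
    ext j; simp [Fin.ext_iff]; omega]
  rw [Finset.sum_insert (by simp)]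

private lemma tl_zero (S : ℕ) (f : Fin S → ℝ) : tl S f 0 = ∑ j, f j := by
  unfold tl; congr 1; ext j; simp

private lemma tl_last (S : ℕ) (hS : 1 ≤ S) (f : Fin S → ℝ) :
    tl S f (S - 1) = f ⟨S - 1, by omega⟩ := by
  unfold tl
  rw [show univ.filter (fun j : Fin S => S - 1 ≤ (j : ℕ)) = {⟨S - 1, by omega⟩} from by
    ext j
    simp only [mem_filter, mem_univ, true_and, mem_singleton, Fin.ext_iff]
    omega]
  rw [Finset.sum_singleton]

private lemma ici_eq (S : ℕ) (i : Fin S) (f : Fin S → ℝ) :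
    ∑ j ∈ Finset.Ici i, f j = tl S f i := by
  unfold tl; congr 1; ext j
  simp only [Finset.mem_Ici, mem_filter, mem_univ, true_and, Fin.le_def]

private lemma ioi_eq (S : ℕ) (i : Fin S) (f : Fin S → ℝ) :
    ∑ j ∈ Finset.Ioi i, f j = tl S f (i + 1) := by
  unfold tl; congr 1; ext j
  simp only [Finset.mem_Ioi, mem_filter, mem_univ, true_and, Fin.lt_def]
  omega

private lemma conv_sum (S : ℕ) (g : ℕ → ℝ) :
    ∑ i ∈ univ.filter (fun i : Fin S => (i : ℕ) < S - 1), g i =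
      ∑ n ∈ range (S - 1), g n := by
  rw [Finset.sum_filter, Fin.sum_univ_eq_sum_range (fun n => if n < S - 1 then g n else 0) S,
    ← Finset.sum_filter]
  congr 1
  ext n
  simp only [mem_filter, mem_range]
  omega

private lemma step (t t' b b' g' p q x : ℝ) (ht : t ≠ 0) (ht' : t' ≠ 0) (hb : b ≠ 0)
    (hT : t = p + t') (hB : b = q + b') :
    (p / t - q / b) * (x - g' / t') * b = b / t * (x * p + g') - b' / t' * g' - q * x := by
  subst hT hB; field_simp; ring

private lemma key (S : ℕ) (hS : 2 ≤ S) (pt pb : Fin S → ℝ)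
    (hpt : ∑ i, pt i = 1) (hpb : ∑ i, pb i = 1)
    (htt : ∀ i, 0 < ∑ j ∈ Finset.Ici i, pt j)
    (htb : ∀ i, 0 < ∑ j ∈ Finset.Ici i, pb j)
    (h : Fin S → ℝ) :
    ∑ i, (pt i - pb i) * h i =
      ∑ i ∈ Finset.univ.filter (fun i : Fin S => (i : ℕ) < S - 1),
        (pt i / ∑ j ∈ Finset.Ici i, pt j - pb i / ∑ j ∈ Finset.Ici i, pb j) *
          (h i - (∑ j ∈ Finset.Ioi i, h j * pt j) / (∑ j ∈ Finset.Ioi i, pt j)) *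
          (∑ j ∈ Finset.Ici i, pb j) := by
  set T := tl S pt with hT
  set B := tl S pb with hB
  set G := tl S (fun j => h j * pt j) with hG
  set Q := tl S (fun j => pb j * h j) with hQ
  have hTpos : ∀ n, (hn : n < S) → 0 < T n := fun n hn => by
    rw [hT, ← ici_eq S ⟨n, hn⟩]; exact htt _
  have hBpos : ∀ n, (hn : n < S) → 0 < B n := fun n hn => by
    rw [hB, ← ici_eq S ⟨n, hn⟩]; exact htb _
  set F := fun n => B n / T n * G n + ((∑ j, pb j * h j) - Q n) with hF
  have main : ∀ i ∈ univ.filter (fun i : Fin S => (i : ℕ) < S - 1),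
      (pt i / ∑ j ∈ Finset.Ici i, pt j - pb i / ∑ j ∈ Finset.Ici i, pb j) *
        (h i - (∑ j ∈ Finset.Ioi i, h j * pt j) / (∑ j ∈ Finset.Ioi i, pt j)) *
        (∑ j ∈ Finset.Ici i, pb j)
      = F ↑i - F (↑i + 1) := by
    intro i hi
    rw [mem_filter] at hi
    have hiS : (i : ℕ) < S := i.isLt
    have hi1 : (i : ℕ) + 1 < S := by omega
    rw [ici_eq S i pt, ici_eq S i pb, ioi_eq S i, ioi_eq S i pt, ← hT, ← hB, ← hG]
    have e1 : T ↑i = pt i + T (↑i + 1) := by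
      rw [hT]; simpa using tl_succ S ↑i hiS pt
    have e2 : B ↑i = pb i + B (↑i + 1) := by
      rw [hB]; simpa using tl_succ S ↑i hiS pb
    have e3 : G ↑i = h i * pt i + G (↑i + 1) := by
      rw [hG]; simpa using tl_succ S ↑i hiS (fun j => h j * pt j)
    have e4 : Q ↑i = pb i * h i + Q (↑i + 1) := by
      rw [hQ]; simpa using tl_succ S ↑i hiS (fun j => pb j * h j)
    rw [step (T ↑i) (T (↑i + 1)) (B ↑i) (B (↑i + 1)) (G (↑i + 1)) (pt i) (pb i) (h i)
      (ne_of_gt (hTpos _ hiS)) (ne_of_gt (hTpos _ hi1)) (ne_of_gt (hBpos _ hiS)) e1 e2]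
    have e5 : F ↑i - F (↑i + 1) =
        B ↑i / T ↑i * G ↑i - B (↑i + 1) / T (↑i + 1) * G (↑i + 1) - (Q ↑i - Q (↑i + 1)) := by
      rw [hF]; ring
    rw [e5, e3, e4]; ring
  rw [Finset.sum_congr rfl main, conv_sum S (fun n => F n - F (n + 1)),
    Finset.sum_range_sub' F (S - 1)]
  have hS1 : S - 1 < S := by omega
  have hT0 : T 0 = 1 := by rw [hT, tl_zero]; exact hpt
  have hB0 : B 0 = 1 := by rw [hB, tl_zero]; exact hpb
  have hG0 : G 0 = ∑ j, h j * pt j := by rw [hG, tl_zero]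
  have hQ0 : Q 0 = ∑ j, pb j * h j := by rw [hQ, tl_zero]
  have hTl : T (S - 1) = pt ⟨S - 1, hS1⟩ := by rw [hT, tl_last S (by omega)]
  have hBl : B (S - 1) = pb ⟨S - 1, hS1⟩ := by rw [hB, tl_last S (by omega)]
  have hGl : G (S - 1) = h ⟨S - 1, hS1⟩ * pt ⟨S - 1, hS1⟩ := by rw [hG, tl_last S (by omega)]
  have hQl : Q (S - 1) = pb ⟨S - 1, hS1⟩ * h ⟨S - 1, hS1⟩ := by rw [hQ, tl_last S (by omega)]
  have hptl : pt ⟨S - 1, hS1⟩ ≠ 0 := by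
    have := hTpos (S - 1) hS1; rw [hTl] at this; exact ne_of_gt this
  have hsub : ∑ i, (pt i - pb i) * h i = (∑ j, h j * pt j) - ∑ j, pb j * h j := by
    rw [← Finset.sum_sub_distrib]; exact Finset.sum_congr rfl fun _ _ => by ring
  rw [hsub, hF]
  simp only [hT0, hB0, hG0, hQ0, hTl, hBl, hGl, hQl]
  field_simp
  ring

/-- The stick-breaking representation of the difference of two probability vectors
(Fact `DirRepresent` of the paper). -/
theorem stmt_18 (S : ℕ) (hS : 2 ≤ S) (pt pb : Fin S → ℝ)
    (hpt : pt ∈ stdSimplex ℝ (Fin S)) (hpb : pb ∈ stdSimplex ℝ (Fin S))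
    (htt : ∀ i, 0 < ∑ j ∈ Finset.Ici i, pt j)
    (htb : ∀ i, 0 < ∑ j ∈ Finset.Ici i, pb j)
    (h : Fin S → ℝ) :
    (∑ i, (pt i - pb i) * h i =
      ∑ i ∈ Finset.univ.filter (fun i : Fin S => (i : ℕ) < S - 1),
        (pt i / ∑ j ∈ Finset.Ici i, pt j - pb i / ∑ j ∈ Finset.Ici i, pb j) *
          (h i - (∑ j ∈ Finset.Ioi i, h j * pt j) / (∑ j ∈ Finset.Ioi i, pt j)) *
          (∑ j ∈ Finset.Ici i, pb j)) ∧
    (∑ i, (pt i - pb i) * h i =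
      ∑ i ∈ Finset.univ.filter (fun i : Fin S => (i : ℕ) < S - 1),
        (pt i / ∑ j ∈ Finset.Ici i, pt j - pb i / ∑ j ∈ Finset.Ici i, pb j) *
          (h i - (∑ j ∈ Finset.Ioi i, h j * pb j) / (∑ j ∈ Finset.Ioi i, pb j)) *
          (∑ j ∈ Finset.Ici i, pt j)) := by
  constructor
  · exact key S hS pt pb hpt.2 hpb.2 htt htb h
  · have k2 := key S hS pb pt hpb.2 hpt.2 htb htt h
    have e : ∑ i, (pt i - pb i) * h i = -∑ i, (pb i - pt i) * h i := by
      rw [← Finset.sum_neg_distrib]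
      exact Finset.sum_congr rfl fun _ _ => by ring
    rw [e, k2, ← Finset.sum_neg_distrib]
    exact Finset.sum_congr rfl fun i _ => by ring
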